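/- For n, k ≥ 1 with n ≥ k, the degenerate r-Stirling numbers of the second kind satisfy the recurrence {n+1+r brace k+r}_{r,λ} = {n+r brace k-1+r}_{r,λ} + (k + r - nλ) {n+r brace k+r}_{r,λ}. -/
import Mathlib


/-- Generalized falling factorial `(y)_{m,λ} = y(y-λ)⋯(y-(m-1)λ)`. -/
noncomputable def degFallFact (y l : ℝ) (m : ℕ) : ℝ :=
  ∏ i ∈ Finset.range m, (y - i * l)

noncomputable def ffAux (x : ℝ) (k : ℕ) : ℝ := ∏ i ∈ Finset.range k, (x - i)

lemma ffAux_succ (x : ℝ) (k : ℕ) : ffAux x (k+1) = ffAux x k * (x - k) :=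
  Finset.prod_range_succ _ _

lemma ffAux_nat_zero {k j : ℕ} (h : k < j) : ffAux (k : ℝ) j = 0 := by
  apply Finset.prod_eq_zero (Finset.mem_range.mpr h)
  simp

lemma ffAux_nat_self_ne (k : ℕ) : ffAux (k : ℝ) k ≠ 0 := by
  apply Finset.prod_ne_zero_iff.mpr
  intro i hi
  have h1 : i < k := Finset.mem_range.mp hi
  have h2 : (i:ℝ) < k := by exact_mod_cast h1
  intro hzero
  linarith

lemma coeff_zero (N : ℕ) (a : ℕ → ℝ)
    (h : ∀ x : ℝ, ∑ j ∈ Finset.range N, a j * ffAux x j = 0) :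
    ∀ k, k < N → a k = 0 := by
  intro k
  induction k using Nat.strong_induction_on with
  | _ k ih =>
    intro hk
    have h0 := h (k : ℝ)
    have hsum : ∑ j ∈ Finset.range N, a j * ffAux (k:ℝ) j = a k * ffAux (k:ℝ) k := by
      apply Finset.sum_eq_single
      · intro j hj hne
        rcases lt_or_gt_of_ne hne with hlt | hgt
        · rw [ih j hlt (lt_trans hlt hk)]; ring
        · rw [ffAux_nat_zero hgt]; ring
      · intro hk'; exact absurd (Finset.mem_range.mpr hk) hk'
    rw [hsum] at h0
    exact (mul_eq_zero.mp h0).resolve_right (ffAux_nat_self_ne k)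

/-- for `n ≥ k ≥ 1`,
`{n+1+r brace k+r}_{r,λ} = {n+r brace k-1+r}_{r,λ} + (k+r-nλ) {n+r brace k+r}_{r,λ}`. -/
theorem degStirling_recurrence (l : ℝ) (r : ℕ) (S : ℕ → ℕ → ℝ)
    (hS : ∀ (m : ℕ) (x : ℝ), degFallFact (x + r) l m =
      ∑ k ∈ Finset.range (m + 1), S m k * ∏ i ∈ Finset.range k, (x - i))
    (n k : ℕ) (hk : 1 ≤ k) (hnk : k ≤ n) :
    S (n + 1) k = S n (k - 1) + ((k : ℝ) + r - n * l) * S n k := by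
  set c : ℕ → ℝ := fun j =>
    S (n+1) j - (if j = 0 then 0 else S n (j-1))
      - (if j < n+1 then ((j:ℝ) + r - n*l) * S n j else 0) with hc
  have hzero : ∀ x : ℝ, ∑ j ∈ Finset.range (n+2), c j * ffAux x j = 0 := by
    intro x
    have h1 : degFallFact (x + r) l (n+1)
        = ∑ j ∈ Finset.range (n+2), S (n+1) j * ffAux x j := hS (n+1) x
    have h2 : degFallFact (x + r) l n
        = ∑ j ∈ Finset.range (n+1), S n j * ffAux x j := hS n x
    have hstep : degFallFact (x + r) l (n+1)
        = (x + r - n * l) * degFallFact (x + r) l n := by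
      unfold degFallFact
      rw [Finset.prod_range_succ]
      ring
    have hA : ∑ j ∈ Finset.range (n+2),
        (if j = 0 then (0:ℝ) else S n (j-1)) * ffAux x j
        = ∑ j ∈ Finset.range (n+1), S n j * ffAux x (j+1) := by
      rw [Finset.sum_range_succ']
      simp
    have hB : ∑ j ∈ Finset.range (n+2),
        (if j < n+1 then ((j:ℝ) + r - n*l) * S n j else 0) * ffAux x j
        = ∑ j ∈ Finset.range (n+1), ((j:ℝ) + r - n*l) * S n j * ffAux x j := by
      rw [Finset.sum_range_succ, if_neg (lt_irrefl (n+1)), zero_mul, add_zero]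
      exact Finset.sum_congr rfl (fun j hj => by rw [if_pos (Finset.mem_range.mp hj)])
    have key : (x + r - n * l) * ∑ j ∈ Finset.range (n+1), S n j * ffAux x j
        = ∑ j ∈ Finset.range (n+1), S n j * ffAux x (j+1)
          + ∑ j ∈ Finset.range (n+1), ((j:ℝ) + r - n*l) * S n j * ffAux x j := by
      rw [Finset.mul_sum, ← Finset.sum_add_distrib]
      apply Finset.sum_congr rfl
      intro j hj
      rw [ffAux_succ]
      ring
    have expand : ∑ j ∈ Finset.range (n+2), c j * ffAux x j
        = ∑ j ∈ Finset.range (n+2), S (n+1) j * ffAux x j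
          - ∑ j ∈ Finset.range (n+2), (if j = 0 then (0:ℝ) else S n (j-1)) * ffAux x j
          - ∑ j ∈ Finset.range (n+2),
              (if j < n+1 then ((j:ℝ) + r - n*l) * S n j else 0) * ffAux x j := by
      rw [← Finset.sum_sub_distrib, ← Finset.sum_sub_distrib]
      apply Finset.sum_congr rfl
      intro j hj
      rw [hc]
      ring
    rw [expand, hA, hB, ← h1, hstep, h2, key]
    ring
  have hck : c k = 0 := coeff_zero (n+2) c hzero k (by omega)
  rw [hc] at hck
  simp only at hck
  rw [if_neg (by omega : ¬ k = 0), if_pos (by omega : k < n+1)] at hck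
  linarith
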